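/- Assume 2 ≤ n ≤ m and let j be a good with v_j ≥ μ. Then the maximum over all allocations π of the product ∏_{i=1}^{n} V_i(π) equals v_j times the maximum over all allocations π' of the reduced instance (with agents indexed by Fin (n−1) and goods G ∖ {j}) of the product ∏_{i'} V_{i'}(π'). In other words, an optimal allocation of the original instance is obtained by giving good j alone to one agent and allocating the remaining goods optimally among the remaining n−1 agents. -/
import Mathlib


/-- The valuation of agent `i` under allocation `π`: the sum of utilities of goods assigned to `i`. -/
def V {G A : Type*} [Fintype G] [DecidableEq A] (v : G → ℝ) (π : G → A) (i : A) : ℝ :=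
  ∑ j ∈ Finset.univ.filter (fun j => π j = i), v j

lemma V_eq_sum_ite {G A : Type*} [Fintype G] [DecidableEq A] (v : G → ℝ) (π : G → A) (i : A) :
    V v π i = ∑ x, if π x = i then v x else 0 := by
  rw [V, ← Finset.sum_filter]

/-- If `v j ≥ μ`, the maximum product of valuations of the full instance equals `v j` times
the maximum product of valuations of the reduced instance obtained by removing good `j`
and one agent. -/
theorem stmt13 (n m : ℕ) (hn : 2 ≤ n) (hnm : n ≤ m)
    (v : Fin m → ℝ) (hv : ∀ j, 0 < v j)
    (j : Fin m) (hj : v j ≥ (∑ j', v j') / n)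
    (P Q : ℝ)
    (hP : IsGreatest {x : ℝ | ∃ π : Fin m → Fin n, x = ∏ i, V v π i} P)
    (hQ : IsGreatest {x : ℝ | ∃ π' : {j' : Fin m // j' ≠ j} → Fin (n - 1),
        x = ∏ i', V (fun j' : {j' : Fin m // j' ≠ j} => v j'.val) π' i'} Q) :
    P = v j * Q := by
  obtain ⟨n', rfl⟩ : ∃ n', n = n' + 1 := ⟨n - 1, by omega⟩
  have hn1 : 1 ≤ n' := by omega
  have hVnonneg : ∀ (π : Fin m → Fin (n' + 1)) i, 0 ≤ V v π i := fun π i =>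
    Finset.sum_nonneg fun x _ => (hv x).le
  have predeq : ∀ (y : Fin (n' + 1)) (h : y ≠ 0) (i : Fin n'), y.pred h = i ↔ y = i.succ := by
    intro y h i
    constructor
    · intro h'; rw [← h', Fin.succ_pred]
    · intro h'; subst h'; simp
  -- direction ≥
  have h1 : v j * Q ≤ P := by
    obtain ⟨π', hπ'⟩ := hQ.1
    set π : Fin m → Fin (n' + 1) :=
      fun j'' => if h : j'' = j then 0 else (π' ⟨j'', h⟩).succ with hπdef
    have h0 : V v π 0 = v j := by
      rw [V]
      have hfil : Finset.univ.filter (fun x => π x = 0) = {j} := by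
        ext x
        simp only [Finset.mem_filter, Finset.mem_univ, true_and, Finset.mem_singleton, hπdef]
        constructor
        · intro hx; by_contra hxj; rw [dif_neg hxj] at hx; exact Fin.succ_ne_zero _ hx
        · intro hx; subst hx; simp
      rw [hfil, Finset.sum_singleton]
    have hsucc : ∀ i : Fin n', V v π i.succ
        = V (fun j' : {j' : Fin m // j' ≠ j} => v j'.val) π' i := by
      intro i
      have key : ∀ x : {j' : Fin m // j' ≠ j}, π x.val = (π' x).succ := by
        intro x; simp [hπdef, x.prop]
      rw [V_eq_sum_ite, V_eq_sum_ite]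
      have hstep : (∑ x : {j' : Fin m // j' ≠ j}, if π' x = i then v x.val else 0)
          = ∑ x : {j' : Fin m // j' ≠ j}, if π x.val = i.succ then v x.val else 0 := by
        apply Finset.sum_congr rfl
        intro x _
        rw [key x]
        simp only [Fin.succ_inj]
      rw [hstep, ← Finset.sum_subtype (Finset.univ.filter (fun x => x ≠ j))
        (fun x => by simp) (fun x => if π x = i.succ then v x else 0)]
      symm
      apply Finset.sum_subset (Finset.filter_subset _ _)
      intro x _ hx
      have hxj : x = j := by simpa using hx
      subst hxj
      have hx0 : π x = 0 := by simp [hπdef]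
      rw [hx0, if_neg (Ne.symm (Fin.succ_ne_zero i))]
    apply hP.2
    refine ⟨π, ?_⟩
    rw [Fin.prod_univ_succ, h0, hπ']
    congr 1
    exact (Finset.prod_congr rfl fun i _ => (hsucc i)).symm
  -- direction ≤
  have h2 : P ≤ v j * Q := by
    obtain ⟨π, hπ⟩ := hP.1
    have htot : ∑ i, V v π i = ∑ j', v j' := Finset.sum_fiberwise Finset.univ π v
    have hjle : (∑ j', v j') ≤ (n' + 1 : ℝ) * v j := by
      rw [ge_iff_le, div_le_iff₀ (by positivity : (0:ℝ) < ((n' + 1 : ℕ) : ℝ))] at hj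
      push_cast at hj ⊢
      linarith
    set S : ℝ := ∑ x : Fin m, if x ≠ j ∧ π x = π j then v x else 0 with hS
    have hS0 : 0 ≤ S := Finset.sum_nonneg fun x _ => by
      split_ifs <;> simp [(hv x).le]
    have hUi0 : V v π (π j) = v j + S := by
      have hsplit : ∀ x : Fin m, (if π x = π j then v x else 0)
          = (if x = j then v x else 0) + (if x ≠ j ∧ π x = π j then v x else 0) := by
        intro x
        by_cases hxj : x = j
        · subst hxj; simp
        · simp [hxj]
      have hstep : V v π (π j) = (∑ x : Fin m, if x = j then v x else 0) + S := by
        rw [V_eq_sum_ite, hS, ← Finset.sum_add_distrib]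
        exact Finset.sum_congr rfl fun x _ => hsplit x
      rw [hstep]
      congr 1
      simp
    -- find the minimal other agent
    have hne : (Finset.univ.erase (π j)).Nonempty := by
      rw [← Finset.card_pos, Finset.card_erase_of_mem (Finset.mem_univ _)]
      simp only [Finset.card_univ, Fintype.card_fin]
      omega
    obtain ⟨i1, hi1mem, hi1min⟩ := Finset.exists_min_image _ (V v π) hne
    have hi1 : i1 ≠ π j := Finset.ne_of_mem_erase hi1mem
    have hsum_erase : V v π (π j) + ∑ i ∈ Finset.univ.erase (π j), V v π i = ∑ i, V v π i :=
      Finset.add_sum_erase _ _ (Finset.mem_univ _)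
    have hcard : (Finset.univ.erase (π j)).card = n' := by
      rw [Finset.card_erase_of_mem (Finset.mem_univ _)]
      simp
    have hbound : (n' : ℝ) * V v π i1 ≤ ∑ i ∈ Finset.univ.erase (π j), V v π i := by
      have := Finset.card_nsmul_le_sum (Finset.univ.erase (π j)) (V v π) (V v π i1)
        (fun i hi => hi1min i hi)
      rwa [hcard, nsmul_eq_mul] at this
    have hVi1 : V v π i1 ≤ v j := by
      have h3 : ∑ i ∈ Finset.univ.erase (π j), V v π i ≤ (n' : ℝ) * v j := by
        have : V v π (π j) ≥ v j := by rw [hUi0]; linarith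
        push_cast at hjle ⊢
        linarith [htot, hsum_erase]
      have hn'pos : (0:ℝ) < (n' : ℝ) := by exact_mod_cast hn1
      nlinarith
    -- build the reduced allocation
    set ρ : Fin m → Fin (n' + 1) := fun x => if π x = π j then i1 else π x with hρdef
    have hρ : ∀ x, ρ x ≠ π j := by
      intro x
      simp only [hρdef]
      split_ifs with h
      · exact hi1
      · exact h
    set c : Equiv.Perm (Fin (n' + 1)) := Equiv.swap 0 (π j) with hc
    have hc0 : ∀ a : Fin (n' + 1), c a = 0 ↔ a = π j := by
      intro a
      constructor
      · intro h
        have : c a = c (π j) := by rw [h, hc, Equiv.swap_apply_right]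
        exact c.injective this
      · intro h; rw [h, hc, Equiv.swap_apply_right]
    have hcne : ∀ x, c (ρ x) ≠ 0 := fun x h => hρ x ((hc0 _).mp h)
    set π' : {j' : Fin m // j' ≠ j} → Fin n' := fun x => (c (ρ x.val)).pred (hcne x.val)
      with hπ'def
    set T : Fin (n' + 1) → ℝ := fun a => ∑ x : Fin m, if x ≠ j ∧ ρ x = a then v x else 0
      with hT
    have hVT : ∀ i : Fin n', V (fun j' : {j' : Fin m // j' ≠ j} => v j'.val) π' i
        = T (c i.succ) := by
      intro i
      rw [V_eq_sum_ite, hT]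
      have hstep : (∑ x : {j' : Fin m // j' ≠ j}, if π' x = i then v x.val else 0)
          = ∑ x : {j' : Fin m // j' ≠ j}, if ρ x.val = c i.succ then v x.val else 0 := by
        apply Finset.sum_congr rfl
        intro x _
        have hiff : π' x = i ↔ ρ x.val = c i.succ := by
          simp only [hπ'def]
          rw [predeq, Equiv.apply_eq_iff_eq_symm_apply, hc, Equiv.symm_swap]
        simp only [hiff]
      rw [hstep, ← Finset.sum_subtype (Finset.univ.filter (fun x => x ≠ j))
        (fun x => by simp) (fun x => if ρ x = c i.succ then v x else 0),
        Finset.sum_filter]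
      apply Finset.sum_congr rfl
      intro x _
      rw [← ite_and]
    -- product over the reduced instance equals product of T over erase
    have hprodT : (∏ i : Fin n', T (c i.succ)) = ∏ a ∈ Finset.univ.erase (π j), T a := by
      have e1 := Fin.prod_univ_succ (fun b : Fin (n' + 1) => if b = 0 then 1 else T (c b))
      rw [if_pos rfl, one_mul] at e1
      have e2 : (∏ i : Fin n', if (i.succ : Fin (n' + 1)) = 0 then 1 else T (c i.succ))
          = ∏ i : Fin n', T (c i.succ) :=
        Finset.prod_congr rfl fun i _ => if_neg (Fin.succ_ne_zero i)
      rw [e2] at e1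
      rw [← e1]
      have e3 : (∏ b : Fin (n' + 1), if b = 0 then 1 else T (c b))
          = ∏ b : Fin (n' + 1), if c b = π j then 1 else T (c b) := by
        apply Finset.prod_congr rfl
        intro b _
        by_cases hb : b = 0
        · subst hb
          rw [if_pos rfl, if_pos (by rw [hc, Equiv.swap_apply_left])]
        · have hcb : c b ≠ π j := by
            intro h
            apply hb
            apply c.injective
            rw [h, hc, Equiv.swap_apply_left]
          rw [if_neg hb, if_neg hcb]
      rw [e3, Equiv.prod_comp c (fun a => if a = π j then 1 else T a),
        ← Finset.mul_prod_erase Finset.univ _ (Finset.mem_univ (π j)), if_pos rfl, one_mul]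
      exact Finset.prod_congr rfl fun a ha => if_neg (Finset.ne_of_mem_erase ha)
    have hTi1 : T i1 = V v π i1 + S := by
      have hsplit : ∀ x : Fin m, (if x ≠ j ∧ ρ x = i1 then v x else 0)
          = (if π x = i1 then v x else 0) + (if x ≠ j ∧ π x = π j then v x else 0) := by
        intro x
        by_cases hpx : π x = π j
        · have hρx : ρ x = i1 := by simp only [hρdef]; simp [hpx]
          by_cases hxj : x = j
          · subst hxj
            simp [hpx, hρx, Ne.symm hi1]
          · simp [hρx, hxj, hpx, Ne.symm hi1]
        · have hρx : ρ x = π x := by simp only [hρdef]; simp [hpx]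
          have hxj : x ≠ j := fun h => hpx (by rw [h])
          simp [hρx, hxj, hpx]
      rw [hT, V_eq_sum_ite, hS, ← Finset.sum_add_distrib]
      exact Finset.sum_congr rfl fun x _ => hsplit x
    have hTa : ∀ a, a ≠ π j → a ≠ i1 → T a = V v π a := by
      intro a ha0 ha1
      rw [hT, V_eq_sum_ite]
      apply Finset.sum_congr rfl
      intro x _
      by_cases hpx : π x = π j
      · have hρx : ρ x = i1 := by simp only [hρdef]; simp [hpx]
        rw [if_neg (by rw [hρx]; exact fun h => ha1 h.2.symm),
          if_neg (by rw [hpx]; exact Ne.symm ha0)]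
      · have hρx : ρ x = π x := by simp only [hρdef]; simp [hpx]
        have hxj : x ≠ j := fun h => hpx (by rw [h])
        rw [hρx]
        simp [hxj]
    -- assemble
    set R : ℝ := ∏ a ∈ (Finset.univ.erase (π j)).erase i1, V v π a with hR
    have hR0 : 0 ≤ R := Finset.prod_nonneg fun a _ => hVnonneg π a
    have hPfact : P = (v j + S) * (V v π i1 * R) := by
      rw [hπ, ← Finset.mul_prod_erase Finset.univ _ (Finset.mem_univ (π j)),
        ← Finset.mul_prod_erase _ _ hi1mem, hUi0, hR]
    have hQcand : (∏ i' : Fin n',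
        V (fun j' : {j' : Fin m // j' ≠ j} => v j'.val) π' i') = (V v π i1 + S) * R := by
      rw [Finset.prod_congr rfl fun i _ => hVT i, hprodT,
        ← Finset.mul_prod_erase _ _ hi1mem, hTi1, hR]
      congr 1
      exact Finset.prod_congr rfl fun a ha =>
        hTa a (Finset.ne_of_mem_erase (Finset.mem_of_mem_erase ha)) (Finset.ne_of_mem_erase ha)
    have hQmem : (V v π i1 + S) * R ≤ Q := by
      apply hQ.2
      exact ⟨π', hQcand.symm⟩
    have key : (v j + S) * V v π i1 ≤ v j * (V v π i1 + S) := by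
      nlinarith [hS0, hVi1, hVnonneg π i1]
    calc P = (v j + S) * (V v π i1 * R) := hPfact
      _ = ((v j + S) * V v π i1) * R := by ring
      _ ≤ (v j * (V v π i1 + S)) * R := mul_le_mul_of_nonneg_right key hR0
      _ = v j * ((V v π i1 + S) * R) := by ring
      _ ≤ v j * Q := mul_le_mul_of_nonneg_left hQmem (hv j).le
  linarith
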